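/- Let S be a finite set of diameter 1 in ℝ² lying on a circle, with |S| = n even. Then the number of unordered pairs of points of S at distance exactly 1 is at most n − 1. -/

import Mathlib

open Complex Finset


lemma aux_even_invol {α : Type*} [DecidableEq α] (s : Finset α) (f : α → α)
    (hmem : ∀ a ∈ s, f a ∈ s) (hinv : ∀ a ∈ s, f (f a) = a) (hne : ∀ a ∈ s, f a ≠ a) :
    Even s.card := by
  induction s using Finset.strongInduction with
  | _ s ih =>
    rcases s.eq_empty_or_nonempty with rfl | ⟨a, ha⟩
    · simp
    · have hfa : f a ∈ s := hmem a ha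
      have hfa' : f a ≠ a := hne a ha
      set s' := (s.erase a).erase (f a) with hs'
      have hsub : s' ⊂ s := by
        refine Finset.ssubset_of_subset_of_ssubset ?_ (Finset.erase_ssubset ha)
        exact Finset.erase_subset _ _
      have hmem' : ∀ b ∈ s', b ∈ s := fun b hb => by
        exact Finset.mem_of_mem_erase (Finset.mem_of_mem_erase hb)
      have hcard : s.card = s'.card + 2 := by
        rw [hs', Finset.card_erase_of_mem (Finset.mem_erase.2 ⟨hfa', hfa⟩),
          Finset.card_erase_of_mem ha]
        have : 1 ≤ s.card := Finset.card_pos.2 ⟨a, ha⟩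
        have : 2 ≤ s.card := Finset.one_lt_card.2 ⟨a, ha, f a, hfa, fun h => hfa' h.symm⟩
        omega
      have : Even s'.card := by
        refine ih s' hsub (fun b hb => ?_) (fun b hb => hinv b (hmem' b hb))
          (fun b hb => hne b (hmem' b hb))
        have hbs := hmem' b hb
        have h1 : f b ∈ s := hmem b hbs
        have hb1 : b ≠ f a := (Finset.mem_erase.1 hb).1
        have hb2 : b ≠ a := (Finset.mem_erase.1 (Finset.mem_of_mem_erase hb)).1
        refine Finset.mem_erase.2 ⟨?_, Finset.mem_erase.2 ⟨?_, h1⟩⟩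
        · intro h; exact hb2 (by rw [← hinv a ha, ← h, hinv b hbs])
        · intro h; exact hb1 (by rw [← h, hinv b hbs])
      obtain ⟨m, hm⟩ := this
      exact ⟨m + 1, by omega⟩


lemma aux_unit_normSq {ζ : ℂ} (h : ‖ζ‖ = 1) : ζ.re * ζ.re + ζ.im * ζ.im = 1 := by
  have := Complex.sq_norm ζ
  rw [h, Complex.normSq_apply] at this
  nlinarith

lemma aux_abs_sub_sq {z w : ℂ} (hz : ‖z‖ = 1) (hw : ‖w‖ = 1) :
    (‖z - w‖) ^ 2 = 2 - 2 * (w * (starRingEnd ℂ) z).re := by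
  have h1 := aux_unit_normSq hz
  have h2 := aux_unit_normSq hw
  rw [Complex.sq_norm, Complex.normSq_apply]
  simp [Complex.mul_re]
  ring_nf
  nlinarith


lemma aux_near (k : ℕ) (hk : 1 ≤ k) (v : ℂ) (hv : ‖v‖ = 1) :
    ∃ ω : ℂ, ω ^ k = 1 ∧ Real.cos (Real.pi / k) ≤ (v * (starRingEnd ℂ) ω).re ∧
      ((v * (starRingEnd ℂ) ω).re ≤ Real.cos (Real.pi / k) → v ^ k = -1) := by
  have hkR : (0:ℝ) < k := by exact_mod_cast hk
  have hπ := Real.pi_pos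
  set ψ := v.arg with hψ
  set j : ℤ := round ((k:ℝ) * ψ / (2 * Real.pi)) with hj
  set θ : ℝ := 2 * Real.pi * j / k with hθ
  set δ : ℝ := ψ - θ with hδdef
  have hδ : |δ| ≤ Real.pi / k := by
    have h1 : |(k:ℝ) * ψ / (2 * Real.pi) - j| ≤ 1 / 2 := abs_sub_round _
    have h2 : δ = ((k:ℝ) * ψ / (2 * Real.pi) - j) * (2 * Real.pi / k) := by
      rw [hδdef, hθ]
      field_simp
    rw [h2, abs_mul, abs_of_pos (div_pos (by positivity) hkR)]
    calc |(k:ℝ) * ψ / (2 * Real.pi) - j| * (2 * Real.pi / k)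
        ≤ (1/2) * (2 * Real.pi / k) := by
          apply mul_le_mul_of_nonneg_right h1 (le_of_lt (div_pos (by positivity) hkR))
      _ = Real.pi / k := by ring
  have hπk : Real.pi / k ≤ Real.pi := by
    apply div_le_self hπ.le
    exact_mod_cast hk
  have hv' : v = Complex.exp ((ψ:ℝ) * Complex.I) := by
    conv_lhs => rw [← Complex.norm_mul_exp_arg_mul_I v]
    rw [hv]; simp [hψ]
  have hconj : (starRingEnd ℂ) (Complex.exp ((θ:ℝ) * Complex.I)) =
      Complex.exp (-((θ:ℝ) * Complex.I)) := by
    rw [← Complex.exp_conj]; congr 1; simp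
  have hre : (v * (starRingEnd ℂ) (Complex.exp ((θ:ℝ) * Complex.I))).re = Real.cos δ := by
    rw [hconj, hv', ← Complex.exp_add]
    have : (ψ:ℂ) * Complex.I + -((θ:ℝ) * Complex.I) = (δ : ℝ) * Complex.I := by
      rw [hδdef]; push_cast; ring
    rw [this, Complex.exp_ofReal_mul_I_re]
  refine ⟨Complex.exp ((θ:ℝ) * Complex.I), ?_, ?_, ?_⟩
  · rw [← Complex.exp_nat_mul, Complex.exp_eq_one_iff]
    refine ⟨j, ?_⟩
    have hθC : ((θ:ℝ):ℂ) = 2 * (Real.pi:ℂ) * (j:ℂ) / (k:ℂ) := by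
      rw [hθ]; push_cast; ring
    have hkC : (k:ℂ) ≠ 0 := by exact_mod_cast hkR.ne'
    rw [hθC]
    field_simp
  · rw [hre, ← Real.cos_abs δ]
    exact Real.cos_le_cos_of_nonneg_of_le_pi (abs_nonneg _) hπk hδ
  · intro hle
    rw [hre] at hle
    have heq : |δ| = Real.pi / k := by
      have hge : Real.cos (Real.pi / k) ≤ Real.cos |δ| :=
        Real.cos_le_cos_of_nonneg_of_le_pi (abs_nonneg _) hπk hδ
      have : Real.cos |δ| = Real.cos (Real.pi / k) := by
        rw [Real.cos_abs]
        have := Real.cos_abs δ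
        linarith
      exact Real.injOn_cos ⟨abs_nonneg _, le_trans hδ hπk⟩
        ⟨by positivity, hπk⟩ this
    have hψeq : (k:ℝ) * ψ = 2 * Real.pi * j + k * δ := by
      rw [hδdef, hθ]; field_simp; ring
    have hψeqC := congrArg Complex.ofReal hψeq
    push_cast at hψeqC
    have hvk : v ^ k = Complex.exp ((((k:ℝ) * ψ : ℝ)) * Complex.I) := by
      rw [hv', ← Complex.exp_nat_mul]; congr 1; push_cast; ring
    have hkδ : (k:ℝ) * δ = Real.pi ∨ (k:ℝ) * δ = -Real.pi := by
      rcases (abs_eq (le_of_lt (div_pos hπ hkR))).mp heq with h | h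
      · left; rw [h]; field_simp
      · right; rw [h]; field_simp
    have hsplit : Complex.exp ((((k:ℝ) * ψ : ℝ)) * Complex.I) =
        Complex.exp ((((2:ℝ) * Real.pi * j : ℝ)) * Complex.I) *
          Complex.exp ((((k:ℝ) * δ : ℝ)) * Complex.I) := by
      rw [← Complex.exp_add]
      congr 1
      push_cast
      linear_combination hψeqC * Complex.I
    have h2πj : Complex.exp ((((2:ℝ) * Real.pi * j : ℝ)) * Complex.I) = 1 := by
      rw [Complex.exp_eq_one_iff]
      exact ⟨j, by push_cast; ring⟩
    have hexp : Complex.exp ((((k:ℝ) * δ : ℝ)) * Complex.I) = -1 := by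
      rcases hkδ with h | h
      · rw [h, Complex.exp_pi_mul_I]
      · rw [h]
        push_cast
        rw [neg_mul, Complex.exp_neg, Complex.exp_pi_mul_I]
        norm_num
    rw [hvk, hsplit, h2πj, hexp, one_mul]


lemma aux_root_re (k : ℕ) (hk : 1 ≤ k) (hodd : ¬ Even k) (ξ : ℂ) (hξ : ξ ^ k = 1) :
    -Real.cos (Real.pi / k) ≤ ξ.re := by
  have hkR : (0:ℝ) < k := by exact_mod_cast hk
  have hπ := Real.pi_pos
  have hxa : ‖ξ‖ = 1 := by
    have h := congrArg (‖·‖) hξ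
    rw [norm_pow, norm_one] at h
    by_contra hne
    rcases lt_or_gt_of_ne hne with hlt | hgt
    · have := pow_lt_one₀ (norm_nonneg ξ) hlt (by omega : k ≠ 0)
      linarith
    · have := one_lt_pow₀ hgt (by omega : k ≠ 0)
      linarith
  set θ := ξ.arg with hθ
  have hξe : ξ = Complex.exp ((θ:ℝ) * Complex.I) := by
    conv_lhs => rw [← Complex.norm_mul_exp_arg_mul_I ξ]
    rw [hxa]; simp [hθ]
  have hexp1 : Complex.exp ((((k:ℝ) * θ : ℝ)) * Complex.I) = 1 := by
    rw [← hξ, hξe, ← Complex.exp_nat_mul]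
    congr 1
    push_cast
    ring
  obtain ⟨m, hm⟩ := Complex.exp_eq_one_iff.mp hexp1
  have hmR : (k:ℝ) * θ = m * (2 * Real.pi) := by
    have := congrArg Complex.im hm
    simpa using this
  have hθval : θ = 2 * Real.pi * m / k := by
    field_simp at hmR ⊢
    linarith
  have hθabs : |θ| = 2 * Real.pi * |(m:ℝ)| / k := by
    rw [hθval, abs_div, abs_of_pos hkR, abs_mul, abs_of_pos (by positivity : (0:ℝ) < 2 * Real.pi)]
  have habsθπ : |θ| ≤ Real.pi := abs_le.2 ⟨(Complex.neg_pi_lt_arg ξ).le, Complex.arg_le_pi ξ⟩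
  have hm2 : 2 * |m| ≤ (k:ℤ) := by
    have : 2 * Real.pi * |(m:ℝ)| / k ≤ Real.pi := hθabs ▸ habsθπ
    rw [div_le_iff₀ hkR] at this
    have h2 : 2 * |(m:ℝ)| ≤ (k:ℝ) := by nlinarith
    exact_mod_cast (by push_cast at h2 ⊢; linarith : (2:ℝ) * |(m:ℤ)| ≤ (k:ℤ))
  have hm2' : 2 * |m| ≤ (k:ℤ) - 1 := by
    rcases eq_or_lt_of_le hm2 with h | h
    · exfalso
      apply hodd
      have : (k:ℤ) = 2 * |m| := h.symm
      have : Even (k:ℤ) := ⟨|m|, by omega⟩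
      exact_mod_cast this
    · omega
  have hθle : |θ| ≤ Real.pi - Real.pi / k := by
    rw [hθabs]
    rw [div_le_iff₀ hkR]
    have hmr : (|(m:ℝ)|) ≤ ((k:ℝ) - 1) / 2 := by
      have : ((2 * |m| : ℤ) : ℝ) ≤ ((k:ℤ) - 1 : ℤ) := by exact_mod_cast hm2'
      push_cast at this
      linarith
    have : (Real.pi - Real.pi / k) * k = Real.pi * k - Real.pi := by
      field_simp
    rw [this]
    nlinarith
  have hre : ξ.re = Real.cos θ := by
    rw [hξe, Complex.exp_ofReal_mul_I_re]
  rw [hre, ← Real.cos_pi_sub, ← Real.cos_abs θ]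
  apply Real.cos_le_cos_of_nonneg_of_le_pi (abs_nonneg _) _ hθle
  have : 0 < Real.pi / k := div_pos hπ hkR
  linarith

set_option maxHeartbeats 2000000 in
open Classical in
lemma aux_core (D : ℝ) (hD0 : 0 < D) (hD2 : D ≤ 2) (A : Finset ℂ)
    (hA : ∀ z ∈ A, ‖z‖ = 1)
    (hdiam : ∀ z ∈ A, ∀ w ∈ A, ‖z - w‖ ≤ D)
    (heven : Even A.card) :
    (A.offDiag.filter fun p => ‖p.1 - p.2‖ = D).card ≤ 2 * (A.card - 1) := by
  by_contra hlt
  push_neg at hlt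
  set P := A.offDiag.filter (fun p => ‖p.1 - p.2‖ = D) with hPdef
  have hPmem : ∀ p ∈ P, p.1 ∈ A ∧ p.2 ∈ A ∧ p.1 ≠ p.2 ∧ ‖p.1 - p.2‖ = D := by
    intro p hp
    rw [hPdef, Finset.mem_filter, Finset.mem_offDiag] at hp
    exact ⟨hp.1.1, hp.1.2.1, hp.1.2.2, hp.2⟩
  have hA1 : A.Nonempty := by
    rcases Finset.eq_empty_or_nonempty A with rfl | h
    · simp [hPdef] at hlt
    · exact h
  have hn1 : 1 ≤ A.card := Finset.card_pos.2 hA1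
  set cD : ℝ := 1 - D ^ 2 / 2 with hcDdef
  -- equality characterization
  have hre_of_eq : ∀ z w : ℂ, ‖z‖ = 1 → ‖w‖ = 1 →
      (‖z - w‖ = D ↔ (w * (starRingEnd ℂ) z).re = cD) := by
    intro z w hz hw
    have hsq := aux_abs_sub_sq hz hw
    constructor
    · intro h
      rw [h] at hsq
      rw [hcDdef]
      nlinarith
    · intro h
      rw [h, hcDdef] at hsq
      have h1 : (‖z - w‖) ^ 2 = D ^ 2 := by linarith
      have h2 : ‖z - w‖ = Real.sqrt (D ^ 2) := by
        rw [← h1, Real.sqrt_sq (norm_nonneg _)]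
      rwa [Real.sqrt_sq hD0.le] at h2
  have hge : ∀ z ∈ A, ∀ w ∈ A, cD ≤ (w * (starRingEnd ℂ) z).re := by
    intro z hz w hw
    have hsq := aux_abs_sub_sq (hA z hz) (hA w hw)
    have hle := hdiam z hz w hw
    have h2 : (‖z - w‖) ^ 2 ≤ D ^ 2 := by
      apply pow_le_pow_left₀ (norm_nonneg _) hle
    rw [hcDdef]
    nlinarith
  -- degrees
  have hdegle : ∀ z ∈ A, ((A.erase z).filter fun w => ‖z - w‖ = D).card ≤ 2 := by
    intro z hz
    have hD4 : D ^ 2 ≤ 4 := by nlinarith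
    have hcd2 : cD ^ 2 ≤ 1 := by rw [hcDdef]; nlinarith [sq_nonneg D, hD4]
    set s : ℝ := Real.sqrt (1 - cD ^ 2) with hsdef
    have hs2 : s ^ 2 = 1 - cD ^ 2 := Real.sq_sqrt (by nlinarith)
    have hzz : z * (starRingEnd ℂ) z = 1 := by
      rw [Complex.mul_conj]
      norm_cast
      rw [← Complex.sq_norm, hA z hz]
      norm_num
    have hsub : ((A.erase z).filter fun w => ‖z - w‖ = D) ⊆
        {z * ⟨cD, s⟩, z * ⟨cD, -s⟩} := by
      intro w hw
      rw [Finset.mem_filter, Finset.mem_erase] at hw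
      obtain ⟨⟨hwz, hwA⟩, habs⟩ := hw
      set u := w * (starRingEnd ℂ) z with hu
      have habsu : ‖u‖ = 1 := by
        rw [hu, norm_mul, Complex.norm_conj, hA z hz, hA w hwA, mul_one]
      have hure : u.re = cD := (hre_of_eq z w (hA z hz) (hA w hwA)).1 habs
      have him2 : u.im ^ 2 = s ^ 2 := by
        have := aux_unit_normSq habsu
        rw [hure] at this
        nlinarith
      have hwzu : w = z * u := by
        calc w = w * 1 := by ring
        _ = w * (z * (starRingEnd ℂ) z) := by rw [hzz]
        _ = z * u := by rw [hu]; ring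
      have him : u.im = s ∨ u.im = -s := by
        have h0 : (u.im - s) * (u.im + s) = 0 := by nlinarith
        rcases mul_eq_zero.1 h0 with h | h
        · left; linarith
        · right; linarith
      rcases him with h | h
      · have hueq : u = (⟨cD, s⟩ : ℂ) := Complex.ext hure h
        rw [hwzu, hueq]
        exact Finset.mem_insert_self _ _
      · have hueq : u = (⟨cD, -s⟩ : ℂ) := Complex.ext hure h
        rw [hwzu, hueq]
        exact Finset.mem_insert_of_mem (Finset.mem_singleton_self _)
    calc ((A.erase z).filter fun w => ‖z - w‖ = D).card
        ≤ ({z * ⟨cD, s⟩, z * ⟨cD, -s⟩} : Finset ℂ).card := Finset.card_le_card hsub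
      _ ≤ 2 := Finset.card_insert_le _ _ |>.trans (by simp)
  -- sum of degrees
  have hsum : P.card = ∑ z ∈ A, ((A.erase z).filter fun w => ‖z - w‖ = D).card := by
    rw [Finset.card_eq_sum_card_fiberwise (f := Prod.fst) (t := A)
      (fun p hp => (hPmem p hp).1)]
    apply Finset.sum_congr rfl
    intro z hz
    apply Finset.card_nbij (i := Prod.snd)
    · intro p hp
      rw [Finset.mem_coe, Finset.mem_filter] at hp
      obtain ⟨hpP, hp1⟩ := hp
      obtain ⟨h1, h2, h3, h4⟩ := hPmem p hpP
      rw [Finset.mem_coe, Finset.mem_filter, Finset.mem_erase]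
      subst hp1
      exact ⟨⟨fun h => h3 h.symm, h2⟩, h4⟩
    · intro p hp q hq hpq
      simp only [Finset.coe_filter, Set.mem_setOf_eq] at hp hq
      exact Prod.ext (hp.2.trans hq.2.symm) hpq
    · intro w hw
      simp only [Finset.coe_filter, Set.mem_setOf_eq, Finset.mem_coe, Finset.mem_erase,
        Finset.mem_filter] at hw
      refine ⟨(z, w), ?_, rfl⟩
      simp only [Set.mem_setOf_eq, Finset.mem_coe, Finset.mem_filter]
      refine ⟨?_, trivial⟩
      rw [hPdef, Finset.mem_filter, Finset.mem_offDiag]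
      exact ⟨⟨hz, hw.1.2, fun h => hw.1.1 h.symm⟩, hw.2⟩
  -- upper bound
  have hPub : P.card ≤ 2 * A.card := by
    rw [hsum]
    calc ∑ z ∈ A, ((A.erase z).filter fun w => ‖z - w‖ = D).card
        ≤ ∑ _z ∈ A, 2 := Finset.sum_le_sum hdegle
      _ = 2 * A.card := by rw [Finset.sum_const, smul_eq_mul]; ring
  -- evenness
  have hPeven : Even P.card := by
    apply aux_even_invol P Prod.swap
    · intro p hp
      obtain ⟨h1, h2, h3, h4⟩ := hPmem p hp
      rw [hPdef, Finset.mem_filter, Finset.mem_offDiag]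
      refine ⟨⟨h2, h1, fun h => h3 h.symm⟩, ?_⟩
      rw [Prod.fst_swap, Prod.snd_swap, ← h4]
      exact norm_sub_rev _ _
    · intro p _; exact Prod.swap_swap p
    · intro p hp h
      obtain ⟨_, _, h3, _⟩ := hPmem p hp
      apply h3
      have := congrArg Prod.fst h
      rw [Prod.fst_swap] at this
      exact this.symm
  have hP2n : P.card = 2 * A.card := by
    obtain ⟨a, ha⟩ := hPeven
    omega
  -- all degrees are 2
  have hdeg2 : ∀ z ∈ A, ((A.erase z).filter fun w => ‖z - w‖ = D).card = 2 := by
    intro z hz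
    by_contra hne
    have hlt2 : ((A.erase z).filter fun w => ‖z - w‖ = D).card < 2 :=
      lt_of_le_of_ne (hdegle z hz) hne
    have : P.card < 2 * A.card := by
      rw [hsum]
      calc ∑ z ∈ A, ((A.erase z).filter fun w => ‖z - w‖ = D).card
          < ∑ _z ∈ A, 2 := Finset.sum_lt_sum hdegle ⟨z, hz, hlt2⟩
        _ = 2 * A.card := by rw [Finset.sum_const, smul_eq_mul]; ring
    omega
  -- neighbor structure
  have hnbrs : ∀ z ∈ A, ∃ u1 u2 : ℂ, u1 ≠ u2 ∧
      ‖u1‖ = 1 ∧ ‖u2‖ = 1 ∧ u1.re = cD ∧ u2.re = cD ∧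
      z * u1 ∈ A ∧ z * u2 ∈ A := by
    intro z hz
    have h2 : 1 < ((A.erase z).filter fun w => ‖z - w‖ = D).card := by
      rw [hdeg2 z hz]; norm_num
    obtain ⟨w1, hw1, w2, hw2, hww⟩ := Finset.one_lt_card.1 h2
    rw [Finset.mem_filter, Finset.mem_erase] at hw1 hw2
    have hzz : z * (starRingEnd ℂ) z = 1 := by
      rw [Complex.mul_conj]
      norm_cast
      rw [← Complex.sq_norm, hA z hz]
      norm_num
    have key : ∀ w : ℂ, w ∈ A → ‖z - w‖ = D →
        ‖w * (starRingEnd ℂ) z‖ = 1 ∧ (w * (starRingEnd ℂ) z).re = cD ∧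
          z * (w * (starRingEnd ℂ) z) = w := by
      intro w hwA habs
      refine ⟨?_, (hre_of_eq z w (hA z hz) (hA w hwA)).1 habs, ?_⟩
      · rw [norm_mul, Complex.norm_conj, hA z hz, hA w hwA, mul_one]
      · calc z * (w * (starRingEnd ℂ) z) = w * (z * (starRingEnd ℂ) z) := by ring
          _ = w := by rw [hzz, mul_one]
    obtain ⟨ha1, ha2, ha3⟩ := key w1 hw1.1.2 hw1.2
    obtain ⟨hb1, hb2, hb3⟩ := key w2 hw2.1.2 hw2.2
    refine ⟨w1 * (starRingEnd ℂ) z, w2 * (starRingEnd ℂ) z, ?_, ha1, hb1, ha2, hb2, ?_, ?_⟩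
    · intro h
      apply hww
      rw [← ha3, ← hb3, h]
    · rw [ha3]; exact hw1.1.2
    · rw [hb3]; exact hw2.1.2
  obtain ⟨z1, hz1⟩ := hA1
  -- D < 2
  have hcDlt1 : cD < 1 := by rw [hcDdef]; nlinarith
  have hcDgtm1 : -1 < cD := by
    by_contra hle
    push_neg at hle
    obtain ⟨u1, u2, hune, hu1a, hu2a, hu1r, hu2r, _, _⟩ := hnbrs z1 hz1
    have h1 := aux_unit_normSq hu1a
    have h2 := aux_unit_normSq hu2a
    rw [hu1r] at h1
    rw [hu2r] at h2
    have hcDm1 : cD = -1 := by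
      have hlow : -1 ≤ cD := by nlinarith [sq_nonneg (cD + 1), sq_nonneg u1.im]
      linarith
    apply hune
    apply Complex.ext
    · rw [hu1r, hu2r]
    · have e1 : u1.im = 0 := by
        have : u1.im * u1.im = 0 := by nlinarith [hcDm1]
        exact mul_self_eq_zero.1 this
      have e2 : u2.im = 0 := by
        have : u2.im * u2.im = 0 := by nlinarith [hcDm1]
        exact mul_self_eq_zero.1 this
      rw [e1, e2]
  -- the rotation ζ0
  set s : ℝ := Real.sqrt (1 - cD ^ 2) with hsdef
  have hs2 : s ^ 2 = 1 - cD ^ 2 := Real.sq_sqrt (by nlinarith)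
  have hs0 : 0 < s := Real.sqrt_pos.2 (by nlinarith)
  set ζ0 : ℂ := ⟨cD, s⟩ with hζ0def
  have habsζ : ‖ζ0‖ = 1 := by
    rw [Complex.norm_def, Complex.normSq_apply]
    simp only [hζ0def]
    rw [show cD * cD + s * s = 1 by nlinarith]
    exact Real.sqrt_one
  have hζre : ζ0.re = cD := rfl
  have hζim : ζ0.im = s := rfl
  have hζ0ne0 : ζ0 ≠ 0 := by
    intro h
    rw [h] at habsζ
    simp at habsζ
  -- closure under multiplication by ζ0
  have hclos : ∀ z ∈ A, z * ζ0 ∈ A := by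
    intro z hz
    obtain ⟨u1, u2, hune, hu1a, hu2a, hu1r, hu2r, hm1, hm2⟩ := hnbrs z hz
    have h1 := aux_unit_normSq hu1a
    have h2 := aux_unit_normSq hu2a
    have hi1 : u1.im = s ∨ u1.im = -s := by
      have h0 : (u1.im - s) * (u1.im + s) = 0 := by nlinarith
      rcases mul_eq_zero.1 h0 with h | h
      · left; linarith
      · right; linarith
    have hi2 : u2.im = s ∨ u2.im = -s := by
      have h0 : (u2.im - s) * (u2.im + s) = 0 := by nlinarith
      rcases mul_eq_zero.1 h0 with h | h
      · left; linarith
      · right; linarith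
    rcases hi1 with h | h
    · have : u1 = ζ0 := Complex.ext (by rw [hu1r, hζre]) (by rw [h, hζim])
      rwa [← this]
    · rcases hi2 with h' | h'
      · have : u2 = ζ0 := Complex.ext (by rw [hu2r, hζre]) (by rw [h', hζim])
        rwa [← this]
      · exfalso
        exact hune (Complex.ext (by rw [hu1r, hu2r]) (by rw [h, h']))
  have hpow : ∀ m : ℕ, z1 * ζ0 ^ m ∈ A := by
    intro m
    induction m with
    | zero => simpa using hz1
    | succ m ih =>
      have := hclos _ ih
      rwa [mul_assoc, ← pow_succ] at this
  -- finite order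
  have hfin : IsOfFinOrder ζ0 := by
    rw [isOfFinOrder_iff_pow_eq_one]
    have : ∃ a b : ℕ, a ≠ b ∧ z1 * ζ0 ^ a = z1 * ζ0 ^ b := by
      obtain ⟨a, b, hab, he⟩ := Finite.exists_ne_map_eq_of_infinite
        (f := fun m : ℕ => (⟨z1 * ζ0 ^ m, hpow m⟩ : {x // x ∈ A}))
      exact ⟨a, b, hab, Subtype.ext_iff.1 he⟩
    obtain ⟨a, b, hab, he⟩ := this
    have hz1ne : z1 ≠ 0 := by
      intro h
      have := hA z1 hz1
      rw [h] at this
      simp at this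
    rcases Nat.lt_or_ge a b with h | h
    · refine ⟨b - a, by omega, ?_⟩
      have : ζ0 ^ a * ζ0 ^ (b - a) = ζ0 ^ a * 1 := by
        rw [mul_one, ← pow_add]
        have : a + (b - a) = b := by omega
        rw [this]
        exact mul_left_cancel₀ hz1ne he.symm
      exact mul_left_cancel₀ (pow_ne_zero a hζ0ne0) this
    · have h' : a ≠ b := hab
      have hba : b < a := by omega
      refine ⟨a - b, by omega, ?_⟩
      have : ζ0 ^ b * ζ0 ^ (a - b) = ζ0 ^ b * 1 := by
        rw [mul_one, ← pow_add]
        have : b + (a - b) = a := by omega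
        rw [this]
        exact mul_left_cancel₀ hz1ne he
      exact mul_left_cancel₀ (pow_ne_zero b hζ0ne0) this
  set k : ℕ := orderOf ζ0 with hkdef
  have hk1 : 1 ≤ k := hfin.orderOf_pos
  have hζk : ζ0 ^ k = 1 := pow_orderOf_eq_one ζ0
  haveI : NeZero k := ⟨by omega⟩
  have hprim : IsPrimitiveRoot ζ0 k := IsPrimitiveRoot.orderOf ζ0
  have hrootsA : ∀ ξ : ℂ, ξ ^ k = 1 → z1 * ξ ∈ A := by
    intro ξ hξ
    obtain ⟨i, _, hi⟩ := hprim.eq_pow_of_pow_eq_one hξ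
    rw [← hi]
    exact hpow i
  have hz1z1 : z1 * (starRingEnd ℂ) z1 = 1 := by
    rw [Complex.mul_conj]
    norm_cast
    rw [← Complex.sq_norm, hA z1 hz1]
    norm_num
  have H : ∀ ξ : ℂ, ξ ^ k = 1 → cD ≤ ξ.re := by
    intro ξ hξ
    have := hge z1 hz1 (z1 * ξ) (hrootsA ξ hξ)
    have heq : (z1 * ξ * (starRingEnd ℂ) z1) = ξ := by
      calc z1 * ξ * (starRingEnd ℂ) z1 = ξ * (z1 * (starRingEnd ℂ) z1) := by ring
        _ = ξ := by rw [hz1z1, mul_one]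
    rwa [heq] at this
  have hkodd : ¬ Even k := by
    intro he
    have : cD ≤ (-1 : ℂ).re := H (-1) (he.neg_one_pow)
    simp at this
    linarith
  have hcDle : cD ≤ -Real.cos (Real.pi / k) := by
    obtain ⟨ω, hωk, hcos, _⟩ := aux_near k hk1 (-1) (by simp)
    have : ((-1 : ℂ) * (starRingEnd ℂ) ω).re = -ω.re := by simp
    rw [this] at hcos
    have h1 := H ω hωk
    have h2 : ω.re ≤ -Real.cos (Real.pi / k) := by
      nlinarith [hcos]
    exact le_trans h1 h2
  have hcDge : -Real.cos (Real.pi / k) ≤ cD := by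
    have := aux_root_re k hk1 hkodd ζ0 hζk
    rwa [hζre] at this
  have hcDeq : cD = -Real.cos (Real.pi / k) := le_antisymm hcDle hcDge
  -- everything is in the orbit
  have hallA : ∀ w ∈ A, ∃ i, i < k ∧ w = z1 * ζ0 ^ i := by
    intro w hw
    set u : ℂ := w * (starRingEnd ℂ) z1 with hu
    have habsu : ‖u‖ = 1 := by
      rw [hu, norm_mul, Complex.norm_conj, hA z1 hz1, hA w hw, mul_one]
    have hwu : w = z1 * u := by
      calc w = w * 1 := by ring
        _ = w * (z1 * (starRingEnd ℂ) z1) := by rw [hz1z1]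
        _ = z1 * u := by rw [hu]; ring
    have hure : ∀ ξ : ℂ, ξ ^ k = 1 → cD ≤ (u * (starRingEnd ℂ) ξ).re := by
      intro ξ hξ
      have := hge (z1 * ξ) (hrootsA ξ hξ) w hw
      have heq : w * (starRingEnd ℂ) (z1 * ξ) = u * (starRingEnd ℂ) ξ := by
        rw [map_mul, hu]; ring
      rwa [heq] at this
    obtain ⟨ω, hωk, hcos, himp⟩ := aux_near k hk1 (-u) (by rw [norm_neg, habsu])
    have hrw : ((-u) * (starRingEnd ℂ) ω).re = -(u * (starRingEnd ℂ) ω).re := by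
      rw [neg_mul, Complex.neg_re]
    have hle2 : ((-u) * (starRingEnd ℂ) ω).re ≤ Real.cos (Real.pi / k) := by
      rw [hrw]
      have := hure ω hωk
      rw [hcDeq] at this
      linarith
    have hneg : (-u) ^ k = -1 := himp hle2
    have huk : u ^ k = 1 := by
      have hoddk : Odd k := Nat.not_even_iff_odd.1 hkodd
      rw [hoddk.neg_pow] at hneg
      have := congrArg Neg.neg hneg
      simpa using this
    obtain ⟨i, hik, hi⟩ := hprim.eq_pow_of_pow_eq_one huk
    exact ⟨i, hik, by rw [hwu, ← hi]⟩
  -- conclude: A is exactly the orbit, which has odd cardinality k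
  have himg : A = (Finset.range k).image (fun i => z1 * ζ0 ^ i) := by
    apply Finset.Subset.antisymm
    · intro w hw
      obtain ⟨i, hik, rfl⟩ := hallA w hw
      exact Finset.mem_image.2 ⟨i, Finset.mem_range.2 hik, rfl⟩
    · intro w hw
      obtain ⟨i, _, rfl⟩ := Finset.mem_image.1 hw
      exact hpow i
  have hz1ne : z1 ≠ 0 := by
    intro h
    have := hA z1 hz1
    rw [h] at this
    simp at this
  have hcardk : A.card = k := by
    rw [himg, Finset.card_image_of_injOn, Finset.card_range]
    intro i hi j hj hij
    simp only [Finset.coe_range, Set.mem_Iio] at hi hj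
    exact hprim.pow_inj hi hj (mul_left_cancel₀ hz1ne hij)
  rw [hcardk] at heven
  exact hkodd heven


open Classical in
/-- Number of ordered pairs of distinct points of `S` at distance exactly `1`
(twice the number of unordered such pairs). -/
noncomputable def unitPairs {d : ℕ} (S : Finset (EuclideanSpace ℝ (Fin d))) : ℕ :=
  (S.offDiag.filter fun p => dist p.1 p.2 = 1).card

/-- An even number `n` of concyclic points of diameter 1 in the plane have at most
`n − 1` diameter pairs. -/
theorem stmt_13 (n : ℕ) (heven : Even n) (S : Finset (EuclideanSpace ℝ (Fin 2)))
    (hcard : S.card = n)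
    (hcirc : ∃ (c : EuclideanSpace ℝ (Fin 2)) (r : ℝ), ∀ x ∈ S, dist x c = r)
    (hdiam : ∀ x ∈ S, ∀ y ∈ S, dist x y ≤ 1)
    (hattain : ∃ x ∈ S, ∃ y ∈ S, dist x y = 1) :
    unitPairs S ≤ 2 * (n - 1) := by
  classical
  obtain ⟨c, r, hc⟩ := hcirc
  obtain ⟨x0, hx0, y0, hy0, hxy0⟩ := hattain
  have hr2 : 1 ≤ 2 * r := by
    have h1 := hc x0 hx0
    have h2 := hc y0 hy0
    have ht := dist_triangle x0 c y0
    rw [h1, dist_comm c y0, h2, hxy0] at ht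
    linarith
  have hr0 : 0 < r := by linarith
  set φ : EuclideanSpace ℝ (Fin 2) → ℂ := fun x => (⟨x 0, x 1⟩ : ℂ) with hφdef
  have hφ : ∀ x y : EuclideanSpace ℝ (Fin 2), ‖φ x - φ y‖ = dist x y := by
    intro x y
    rw [EuclideanSpace.dist_eq, Complex.norm_def, Complex.normSq_apply]
    congr 1
    rw [Fin.sum_univ_two, Real.dist_eq, Real.dist_eq, _root_.sq_abs, _root_.sq_abs]
    simp only [hφdef, Complex.sub_re, Complex.sub_im]
    ring
  set g : EuclideanSpace ℝ (Fin 2) → ℂ := fun x => (φ x - φ c) / (r : ℂ) with hgdef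
  have hgsub : ∀ x y : EuclideanSpace ℝ (Fin 2), g x - g y = (φ x - φ y) / (r : ℂ) := by
    intro x y
    simp only [hgdef]
    ring
  have hgd : ∀ x y : EuclideanSpace ℝ (Fin 2), ‖g x - g y‖ = dist x y / r := by
    intro x y
    rw [hgsub, norm_div, Complex.norm_real, Real.norm_eq_abs, abs_of_pos hr0, hφ]
  have hgu : ∀ x ∈ S, ‖g x‖ = 1 := by
    intro x hx
    have hgc : g c = 0 := by simp [hgdef]
    calc ‖g x‖ = ‖g x - g c‖ := by rw [hgc, sub_zero]
      _ = dist x c / r := hgd x c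
      _ = 1 := by rw [hc x hx]; field_simp
  have hginj : Set.InjOn g S := by
    intro x _ y _ hxy
    have h := hgd x y
    rw [hxy, sub_self, norm_zero] at h
    field_simp at h
    exact dist_eq_zero.1 (by rw [← h]; ring)
  have hdistiff : ∀ x ∈ S, ∀ y ∈ S, (dist x y = 1 ↔ ‖g x - g y‖ = 1 / r) := by
    intro x _ y _
    rw [hgd]
    constructor
    · intro h; rw [h]
    · intro h
      rw [div_eq_div_iff hr0.ne' hr0.ne'] at h
      exact mul_right_cancel₀ hr0.ne' h
  set A : Finset ℂ := S.image g with hAdef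
  have hAcard : A.card = n := by
    rw [hAdef, Finset.card_image_of_injOn hginj, hcard]
  have hAunit : ∀ z ∈ A, ‖z‖ = 1 := by
    intro z hz
    obtain ⟨x, hx, rfl⟩ := Finset.mem_image.1 hz
    exact hgu x hx
  have hD0 : (0:ℝ) < 1 / r := by positivity
  have hD2 : 1 / r ≤ 2 := by
    rw [div_le_iff₀ hr0]
    linarith
  have hAdiam : ∀ z ∈ A, ∀ w ∈ A, ‖z - w‖ ≤ 1 / r := by
    intro z hz w hw
    obtain ⟨x, hx, rfl⟩ := Finset.mem_image.1 hz
    obtain ⟨y, hy, rfl⟩ := Finset.mem_image.1 hw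
    rw [hgd]
    exact (div_le_div_iff_of_pos_right hr0).2 (hdiam x hx y hy)
  have hAeven : Even A.card := by rw [hAcard]; exact heven
  have hkey := aux_core (1 / r) hD0 hD2 A hAunit hAdiam hAeven
  have hcount : unitPairs S = (A.offDiag.filter fun p => ‖p.1 - p.2‖ = 1 / r).card := by
    rw [unitPairs]
    apply Finset.card_nbij (i := fun p => (g p.1, g p.2))
    · intro p hp
      rw [Finset.mem_coe, Finset.mem_filter, Finset.mem_offDiag] at hp
      obtain ⟨⟨h1, h2, h3⟩, h4⟩ := hp
      rw [Finset.mem_coe, Finset.mem_filter, Finset.mem_offDiag]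
      refine ⟨⟨Finset.mem_image_of_mem g h1, Finset.mem_image_of_mem g h2, ?_⟩, ?_⟩
      · intro h
        exact h3 (hginj h1 h2 h)
      · exact (hdistiff p.1 h1 p.2 h2).1 h4
    · intro p hp q hq hpq
      simp only [Finset.coe_filter, Set.mem_setOf_eq, Finset.mem_offDiag] at hp hq
      have h1 := congrArg Prod.fst hpq
      have h2 := congrArg Prod.snd hpq
      simp only at h1 h2
      exact Prod.ext (hginj hp.1.1 hq.1.1 h1) (hginj hp.1.2.1 hq.1.2.1 h2)
    · intro q hq
      simp only [Finset.coe_filter, Set.mem_setOf_eq, Finset.mem_offDiag] at hq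
      obtain ⟨⟨hq1, hq2, hq3⟩, hq4⟩ := hq
      obtain ⟨x, hx, hgx⟩ := Finset.mem_image.1 hq1
      obtain ⟨y, hy, hgy⟩ := Finset.mem_image.1 hq2
      refine ⟨(x, y), ?_, ?_⟩
      · simp only [Set.mem_setOf_eq, Finset.mem_coe, Finset.mem_filter, Finset.mem_offDiag]
        refine ⟨⟨hx, hy, ?_⟩, ?_⟩
        · intro h
          apply hq3
          rw [← hgx, ← hgy, h]
        · apply (hdistiff x hx y hy).2
          rw [hgx, hgy]
          exact hq4
      · simp only [Prod.mk.injEq]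
        exact Prod.ext (by simp [hgx]) (by simp [hgy])
  rw [hcount, ← hAcard]
  exact hkey
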